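/- arXiv:2512.19721 — 3 statements merged into one kernel-verified Lean document; each statement's English description precedes it below -/
import Mathlib

section
/- The peak-to-peak distance is of negative type: for any finite collection A₁,…,A_m ∈ ℝⁿ and any real coefficients c₁,…,c_m with Σᵢ cᵢ = 0, one has Σᵢ Σⱼ cᵢ cⱼ d_peak(Aᵢ, Aⱼ) ≤ 0. -/
open Finset

/-- Sign-aware intersection `N(A,B) = Σ_{i : AᵢBᵢ > 0} min |Aᵢ| |Bᵢ|`. -/
noncomputable def Npeak {n : ℕ} (A B : Fin n → ℝ) : ℝ :=
  ∑ i ∈ Finset.univ.filter (fun i => 0 < A i * B i), min |A i| |B i|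

/-- Peak-to-peak union `U_peak(A,B) = Σᵢ (max Aᵢ⁺ Bᵢ⁺ + max Aᵢ⁻ Bᵢ⁻)`. -/
noncomputable def Upeak {n : ℕ} (A B : Fin n → ℝ) : ℝ :=
  ∑ i, (max (max (A i) 0) (max (B i) 0) + max (max (-(A i)) 0) (max (-(B i)) 0))

/-- Peak-to-peak similarity `J_peak = N/U_peak` (and `1` when `U_peak = 0`). -/
noncomputable def Jpeak {n : ℕ} (A B : Fin n → ℝ) : ℝ :=
  if 0 < Upeak A B then Npeak A B / Upeak A B else 1

/-- Peak-to-peak distance `d_peak = 1 − J_peak`. -/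
noncomputable def dpeak {n : ℕ} (A B : Fin n → ℝ) : ℝ := 1 - Jpeak A B

section Aux

open MeasureTheory Set Real

private lemma sign_split_pt (a b : ℝ) :
    (if 0 < a * b then min |a| |b| else 0)
      = min (max a 0) (max b 0) + min (max (-a) 0) (max (-b) 0) := by
  rcases lt_trichotomy a 0 with ha | ha | ha <;> rcases lt_trichotomy b 0 with hb | hb | hb <;>
    simp [abs_of_neg, abs_of_pos, ha, hb, mul_pos, mul_pos_of_neg_of_neg,
      max_eq_left, max_eq_right, ha.le, hb.le, min_eq_left, min_eq_right,
      mul_nonpos_iff, not_lt, le_of_lt, neg_nonpos, neg_nonneg]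

private lemma abs_decomp (x : ℝ) : max x 0 + max (-x) 0 = |x| := by
  rcases le_total 0 x with h | h
  · rw [max_eq_left h, max_eq_right (neg_nonpos.2 h), abs_of_nonneg h, add_zero]
  · rw [max_eq_right h, max_eq_left (neg_nonneg.2 h), abs_of_nonpos h, zero_add]

private lemma Npeak_eq {n : ℕ} (A B : Fin n → ℝ) :
    Npeak A B = ∑ k, (min (max (A k) 0) (max (B k) 0)
      + min (max (-(A k)) 0) (max (-(B k)) 0)) := by
  rw [Npeak, Finset.sum_filter]
  exact Finset.sum_congr rfl fun k _ => sign_split_pt (A k) (B k)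

private lemma Npeak_nonneg {n : ℕ} (A B : Fin n → ℝ) : 0 ≤ Npeak A B := by
  rw [Npeak_eq]
  exact Finset.sum_nonneg fun k _ => add_nonneg
    (le_min (le_max_right _ _) (le_max_right _ _))
    (le_min (le_max_right _ _) (le_max_right _ _))

private lemma Npeak_comm {n : ℕ} (A B : Fin n → ℝ) : Npeak A B = Npeak B A := by
  rw [Npeak_eq, Npeak_eq]
  exact Finset.sum_congr rfl fun k _ => by rw [min_comm, min_comm (max (-(B k)) 0)]

private lemma Npeak_le_left {n : ℕ} (A B : Fin n → ℝ) : Npeak A B ≤ ∑ k, |A k| := by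
  rw [Npeak_eq]
  refine Finset.sum_le_sum fun k _ => ?_
  rw [← abs_decomp (A k)]
  exact add_le_add (min_le_left _ _) (min_le_left _ _)

private lemma Upeak_eq {n : ℕ} (A B : Fin n → ℝ) :
    Upeak A B = (∑ k, |A k|) + (∑ k, |B k|) - Npeak A B := by
  rw [Npeak_eq, Upeak, ← Finset.sum_add_distrib, ← Finset.sum_sub_distrib]
  refine Finset.sum_congr rfl fun k _ => ?_
  have h1 := max_add_min (max (A k) 0) (max (B k) 0)
  have h2 := max_add_min (max (-(A k)) 0) (max (-(B k)) 0)
  have h3 := abs_decomp (A k)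
  have h4 := abs_decomp (B k)
  linarith

private lemma min_psd {m : ℕ} (u : Fin m → ℝ) (hu : ∀ i, 0 ≤ u i) (c : Fin m → ℝ) :
    0 ≤ ∑ i, ∑ j, c i * c j * min (u i) (u j) := by
  classical
  set f : Fin m → ℝ → ℝ := fun i => (Set.Ioc 0 (u i)).indicator (fun _ => c i) with hf
  have hprod : ∀ i j, (fun t => f i t * f j t)
      = (Set.Ioc 0 (min (u i) (u j))).indicator (fun _ => c i * c j) := by
    intro i j
    funext t
    rw [hf]
    simp only
    rw [← Set.inter_indicator_mul, Set.Ioc_inter_Ioc, max_self]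
  have hint : ∀ i j,
      Integrable ((Set.Ioc 0 (min (u i) (u j))).indicator (fun _ => c i * c j))
        (volume : Measure ℝ) := by
    intro i j
    rw [integrable_indicator_iff measurableSet_Ioc]
    exact integrableOn_const measure_Ioc_lt_top.ne
  have hfint : ∀ i j, Integrable (fun t => f i t * f j t) (volume : Measure ℝ) := by
    intro i j; rw [hprod i j]; exact hint i j
  have key : ∀ i j, ∫ t, f i t * f j t = c i * c j * min (u i) (u j) := by
    intro i j
    rw [hprod i j, integral_indicator measurableSet_Ioc, setIntegral_const,
      measureReal_def, Real.volume_Ioc, smul_eq_mul, mul_comm]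
    congr 1
    rw [sub_zero, ENNReal.toReal_ofReal (le_min (hu i) (hu j))]
  calc (0:ℝ) ≤ ∫ t, (∑ i, f i t) ^ 2 := integral_nonneg fun t => sq_nonneg _
    _ = ∑ i, ∑ j, ∫ t, f i t * f j t := by
        have hsq : (fun t => (∑ i, f i t) ^ 2)
            = fun t => ∑ i, ∑ j, f i t * f j t := by
          funext t; rw [sq, Finset.sum_mul_sum]
        rw [hsq, integral_finset_sum _
          (fun i _ => integrable_finset_sum _ fun j _ => hfint i j)]
        exact Finset.sum_congr rfl fun i _ =>
          integral_finset_sum _ fun j _ => hfint i j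
    _ = ∑ i, ∑ j, c i * c j * min (u i) (u j) :=
        Finset.sum_congr rfl fun i _ => Finset.sum_congr rfl fun j _ => key i j

private lemma gram_of_psd {m : ℕ} (K : Fin m → Fin m → ℝ) (hsym : ∀ i j, K i j = K j i)
    (hpsd : ∀ c : Fin m → ℝ, 0 ≤ ∑ i, ∑ j, c i * c j * K i j) :
    ∃ g : Fin m → Fin m → ℝ, ∀ i j, K i j = ∑ s, g s i * g s j := by
  have hps : (Matrix.of K).PosSemidef := by
    refine Matrix.posSemidef_iff_dotProduct_mulVec.mpr ⟨?_, ?_⟩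
    · ext i j
      simp only [Matrix.conjTranspose_apply, Matrix.of_apply, star_trivial]
      exact hsym j i
    · intro x
      have h := hpsd x
      simp only [dotProduct, Matrix.mulVec, Matrix.of_apply, star_trivial]
      calc (0:ℝ) ≤ ∑ i, ∑ j, x i * x j * K i j := h
        _ = ∑ i, x i * ∑ j, K i j * x j := by
            refine Finset.sum_congr rfl fun i _ => ?_
            rw [Finset.mul_sum]
            exact Finset.sum_congr rfl fun j _ => by ring
  obtain ⟨B, hB⟩ : ∃ B : Matrix (Fin m) (Fin m) ℝ, Matrix.of K = B.conjTranspose * B := by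
    open scoped MatrixOrder in exact CStarAlgebra.nonneg_iff_eq_star_mul_self.mp hps.nonneg
  refine ⟨fun s i => B s i, fun i j => ?_⟩
  have h := congrFun (congrFun hB i) j
  simp only [Matrix.of_apply, Matrix.mul_apply, Matrix.conjTranspose_apply,
    star_trivial] at h
  exact h

private lemma pow_psd {m : ℕ} (K : Fin m → Fin m → ℝ) (g : Fin m → Fin m → ℝ)
    (hg : ∀ i j, K i j = ∑ s, g s i * g s j) :
    ∀ (k : ℕ) (c : Fin m → ℝ), 0 ≤ ∑ i, ∑ j, c i * c j * K i j ^ k := by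
  intro k
  induction k with
  | zero =>
    intro c
    simp only [pow_zero, mul_one]
    rw [← Finset.sum_mul_sum]
    exact mul_self_nonneg _
  | succ k ih =>
    intro c
    have point : ∀ i j, c i * c j * K i j ^ (k + 1)
        = ∑ s, (c i * g s i) * (c j * g s j) * K i j ^ k := by
      intro i j
      rw [pow_succ, show K i j ^ k * K i j = K i j * K i j ^ k by ring, hg i j,
        Finset.sum_mul]
      rw [Finset.mul_sum]
      exact Finset.sum_congr rfl fun s _ => by ring
    calc (0:ℝ) ≤ ∑ s, ∑ i, ∑ j, (c i * g s i) * (c j * g s j) * K i j ^ k :=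
          Finset.sum_nonneg fun s _ => ih (fun i => c i * g s i)
      _ = ∑ i, ∑ j, c i * c j * K i j ^ (k + 1) := by
          rw [Finset.sum_comm]
          refine Finset.sum_congr rfl fun i _ => ?_
          rw [Finset.sum_comm]
          exact Finset.sum_congr rfl fun j _ => (point i j).symm

private lemma ratio_pow_psd {m : ℕ} (N : Fin m → Fin m → ℝ) (a : Fin m → ℝ)
    (ha : ∀ i, 0 ≤ a i)
    (hN0 : ∀ i j, a i + a j = 0 → N i j = 0)
    (g : Fin m → Fin m → ℝ) (hg : ∀ i j, N i j = ∑ s, g s i * g s j)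
    (k : ℕ) (c : Fin m → ℝ) :
    0 ≤ ∑ i, ∑ j, c i * c j * (N i j / (a i + a j)) ^ (k + 1) := by
  set K : ℕ := k + 1 with hK
  set Kr : ℝ := (K : ℝ) with hKr
  have hKr1 : (1:ℝ) ≤ Kr := by rw [hKr]; exact_mod_cast Nat.one_le_iff_ne_zero.2 (by omega)
  have hKrpos : (0:ℝ) < Kr := by linarith
  set Fn : Fin m → Fin m → ℝ → ℝ := fun i j t =>
    c i * c j * N i j ^ K * (t ^ (Kr - 1) * Real.exp (-((a i + a j) * t))) with hFn
  have hpt : ∀ t ∈ Set.Ioi (0:ℝ), 0 ≤ ∑ i, ∑ j, Fn i j t := by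
    intro t ht
    have h1 : ∑ i, ∑ j, Fn i j t = t ^ (Kr - 1) *
        ∑ i, ∑ j, (c i * Real.exp (-(a i * t))) * (c j * Real.exp (-(a j * t)))
          * N i j ^ K := by
      rw [Finset.mul_sum]
      refine Finset.sum_congr rfl fun i _ => ?_
      rw [Finset.mul_sum]
      refine Finset.sum_congr rfl fun j _ => ?_
      rw [hFn]
      simp only
      rw [show -((a i + a j) * t) = -(a i * t) + -(a j * t) by ring, Real.exp_add]
      ring
    rw [h1]
    exact mul_nonneg (Real.rpow_nonneg (le_of_lt ht) _)
      (pow_psd N g hg K (fun i => c i * Real.exp (-(a i * t))))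
  have hInt : ∀ i j, IntegrableOn (Fn i j) (Set.Ioi 0) volume := by
    intro i j
    rcases (add_nonneg (ha i) (ha j)).eq_or_lt with h0 | hpos
    · have hNz : N i j = 0 := hN0 i j h0.symm
      have : Fn i j = fun _ => (0:ℝ) := by
        funext t; rw [hFn]; simp [hNz, hK]
      rw [this]
      exact integrableOn_zero
    · have hbase := integrableOn_rpow_mul_exp_neg_mul_rpow
        (s := Kr - 1) (p := 1) (b := a i + a j) (by linarith) one_pos hpos
      have heq : (fun x : ℝ => x ^ (Kr - 1) * Real.exp (-(a i + a j) * x ^ (1:ℝ)))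
          = fun x : ℝ => x ^ (Kr - 1) * Real.exp (-((a i + a j) * x)) := by
        funext x; rw [Real.rpow_one, neg_mul]
      rw [heq] at hbase
      exact hbase.const_mul _
  have hIval : ∀ i j, ∫ t in Set.Ioi (0:ℝ), Fn i j t
      = Real.Gamma Kr * (c i * c j * (N i j / (a i + a j)) ^ K) := by
    intro i j
    rcases (add_nonneg (ha i) (ha j)).eq_or_lt with h0 | hpos
    · have hNz : N i j = 0 := hN0 i j h0.symm
      have : Fn i j = fun _ => (0:ℝ) := by
        funext t; rw [hFn]; simp [hNz, hK]
      rw [this, hNz]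
      simp [hK]
    · have : ∫ t in Set.Ioi (0:ℝ), Fn i j t
          = c i * c j * N i j ^ K *
            ∫ t in Set.Ioi (0:ℝ), t ^ (Kr - 1) * Real.exp (-((a i + a j) * t)) := by
        rw [← integral_const_mul]
      rw [this, Real.integral_rpow_mul_exp_neg_mul_Ioi hKrpos hpos,
        Real.rpow_natCast, div_pow]
      have hne : (a i + a j) ≠ 0 := ne_of_gt hpos
      field_simp
      rw [one_pow, mul_one, div_pow, mul_assoc (c i * c j), mul_div_assoc', mul_div_cancel_left₀ _ (pow_ne_zero _ hne)]
  have h0 : 0 ≤ ∫ t in Set.Ioi (0:ℝ), ∑ i, ∑ j, Fn i j t :=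
    setIntegral_nonneg measurableSet_Ioi hpt
  have hswap : ∫ t in Set.Ioi (0:ℝ), ∑ i, ∑ j, Fn i j t
      = ∑ i, ∑ j, ∫ t in Set.Ioi (0:ℝ), Fn i j t := by
    rw [integral_finset_sum _ (fun i _ => integrable_finset_sum _ fun j _ => hInt i j)]
    exact Finset.sum_congr rfl fun i _ => integral_finset_sum _ fun j _ => hInt i j
  rw [hswap] at h0
  simp only [hIval] at h0
  simp_rw [← Finset.mul_sum] at h0
  have hΓ : 0 < Real.Gamma Kr := Real.Gamma_pos_of_pos hKrpos
  by_contra hneg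
  push_neg at hneg
  exact absurd h0 (not_le.2 (mul_neg_of_pos_of_neg hΓ hneg))

end Aux

/-- The peak-to-peak distance is of negative type: for any `A₁,…,A_m ∈ ℝⁿ` and
real coefficients `c₁,…,c_m` with `Σᵢ cᵢ = 0`, one has
`Σᵢ Σⱼ cᵢ cⱼ d_peak(Aᵢ,Aⱼ) ≤ 0`. -/
theorem dpeak_negative_type {n m : ℕ} (A : Fin m → Fin n → ℝ) (c : Fin m → ℝ)
    (hc : ∑ i, c i = 0) :
    ∑ i : Fin m, ∑ j : Fin m, c i * c j * dpeak (A i) (A j) ≤ 0 := by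
  classical
  set a : Fin m → ℝ := fun i => ∑ k, |A i k| with ha_def
  have ha : ∀ i, 0 ≤ a i := fun i => Finset.sum_nonneg fun k _ => abs_nonneg _
  set N : Fin m → Fin m → ℝ := fun i j => Npeak (A i) (A j) with hN_def
  have hNle : ∀ i j, N i j ≤ a i := fun i j => Npeak_le_left (A i) (A j)
  have hNle' : ∀ i j, N i j ≤ a j := fun i j => by
    rw [hN_def]; simp only; rw [Npeak_comm]; exact Npeak_le_left (A j) (A i)
  have hNnn : ∀ i j, 0 ≤ N i j := fun i j => Npeak_nonneg _ _
  have hN0 : ∀ i j, a i + a j = 0 → N i j = 0 := by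
    intro i j h
    have hai : a i = 0 := le_antisymm (by linarith [ha j]) (ha i)
    exact le_antisymm (by rw [← hai]; exact hNle i j) (hNnn i j)
  have hU : ∀ i j, Upeak (A i) (A j) = a i + a j - N i j := fun i j =>
    Upeak_eq (A i) (A j)
  -- the ratio kernel and the zero-block kernel
  set r : Fin m → Fin m → ℝ := fun i j => N i j / (a i + a j) with hr_def
  set z : Fin m → ℝ := fun i => if a i = 0 then 1 else 0 with hz_def
  have hr01 : ∀ i j, 0 ≤ r i j ∧ r i j ≤ 1 / 2 := by
    intro i j
    rcases (add_nonneg (ha i) (ha j)).eq_or_lt with h0 | hpos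
    · constructor <;> simp [hr_def, hN0 i j h0.symm]
    · refine ⟨div_nonneg (hNnn i j) (by linarith), ?_⟩
      rw [hr_def]
      simp only
      rw [div_le_iff₀ hpos]
      have := hNle i j; have := hNle' i j
      linarith
  -- decomposition of Jpeak
  have hJdecomp : ∀ i j, Jpeak (A i) (A j) = (∑' k : ℕ, r i j ^ (k + 1)) + z i * z j := by
    intro i j
    rcases (add_nonneg (ha i) (ha j)).eq_or_lt with h0 | hpos
    · have hai : a i = 0 := le_antisymm (by linarith [ha j]) (ha i)
      have haj : a j = 0 := le_antisymm (by linarith [ha i]) (ha j)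
      have hNz : N i j = 0 := hN0 i j h0.symm
      have hUz : Upeak (A i) (A j) = 0 := by rw [hU i j, hNz, hai, haj]; ring
      have hrz : r i j = 0 := by simp [hr_def, hNz]
      rw [Jpeak, hUz, if_neg (lt_irrefl 0), hrz]
      simp [hz_def, hai, haj]
    · have hUpos : 0 < Upeak (A i) (A j) := by
        rw [hU i j]
        have := hNle i j; have := hNle' i j
        linarith
      have hzz : z i * z j = 0 := by
        rcases (ha i).eq_or_lt with hi | hi
        · rcases (ha j).eq_or_lt with hj | hj
          · exfalso; rw [← hi, ← hj] at hpos; simp at hpos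
          · simp [hz_def, ne_of_gt hj]
        · simp [hz_def, ne_of_gt hi]
      have hrlt : r i j < 1 := lt_of_le_of_lt (hr01 i j).2 (by norm_num)
      have htsum : ∑' k : ℕ, r i j ^ (k + 1) = (1 - r i j)⁻¹ * r i j := by
        simp_rw [pow_succ]
        rw [tsum_mul_right, tsum_geometric_of_lt_one (hr01 i j).1 hrlt]
      rw [Jpeak, if_pos hUpos, htsum, hzz, add_zero, hU i j]
      have hne : a i + a j ≠ 0 := ne_of_gt hpos
      have hUne : a i + a j - N i j ≠ 0 := by
        rw [← hU i j]; exact ne_of_gt hUpos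
      have h1r : (0:ℝ) < 1 - r i j := by linarith
      simp only [hr_def]
      field_simp
      ring
  -- reduce the goal to positive semidefiniteness of Jpeak
  have hzero : ∑ i, ∑ j, c i * c j = 0 := by
    simp_rw [← Finset.mul_sum, hc, mul_zero, Finset.sum_const_zero]
  have hswap3 : ∀ (f : Fin m → Fin m → Fin n → ℝ),
      ∑ i, ∑ j, ∑ k, f i j k = ∑ k, ∑ i, ∑ j, f i j k := by
    intro f
    calc ∑ i, ∑ j, ∑ k, f i j k
        = ∑ i, ∑ k, ∑ j, f i j k :=
          Finset.sum_congr rfl fun i _ => Finset.sum_comm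
      _ = ∑ k, ∑ i, ∑ j, f i j k := Finset.sum_comm
  -- N is a positive semidefinite kernel
  have hNsym : ∀ i j, N i j = N j i := fun i j => Npeak_comm _ _
  have hNpsd : ∀ d : Fin m → ℝ, 0 ≤ ∑ i, ∑ j, d i * d j * N i j := by
    intro d
    have hrw : ∑ i, ∑ j, d i * d j * N i j
        = ∑ k : Fin n, ∑ i, ∑ j,
            (d i * d j * min (max (A i k) 0) (max (A j k) 0)
              + d i * d j * min (max (-(A i k)) 0) (max (-(A j k)) 0)) := by
      rw [← hswap3]
      refine Finset.sum_congr rfl fun i _ => Finset.sum_congr rfl fun j _ => ?_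
      simp only [hN_def]
      rw [Npeak_eq, Finset.mul_sum]
      exact Finset.sum_congr rfl fun k _ => mul_add _ _ _
    rw [hrw]
    refine Finset.sum_nonneg fun k _ => ?_
    simp_rw [Finset.sum_add_distrib]
    exact add_nonneg
      (min_psd (fun i => max (A i k) 0) (fun i => le_max_right _ _) d)
      (min_psd (fun i => max (-(A i k)) 0) (fun i => le_max_right _ _) d)
  obtain ⟨g, hg⟩ := gram_of_psd N hNsym hNpsd
  -- summability of the geometric pieces
  have hsumm : ∀ i j, Summable (fun k : ℕ => r i j ^ (k + 1)) := by
    intro i j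
    simp_rw [pow_succ]
    exact (summable_geometric_of_lt_one (hr01 i j).1
      (lt_of_le_of_lt (hr01 i j).2 (by norm_num))).mul_right _
  have hsumm2 : ∀ i j, Summable (fun k : ℕ => c i * c j * r i j ^ (k + 1)) :=
    fun i j => (hsumm i j).mul_left _
  -- Jpeak is positive semidefinite
  have hJ : 0 ≤ ∑ i, ∑ j, c i * c j * Jpeak (A i) (A j) := by
    simp_rw [hJdecomp, mul_add, Finset.sum_add_distrib]
    refine add_nonneg ?_ ?_
    · calc (0:ℝ) ≤ ∑' k : ℕ, ∑ i, ∑ j, c i * c j * r i j ^ (k + 1) :=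
            tsum_nonneg fun k => ratio_pow_psd N a ha hN0 g hg k c
        _ = ∑ i, ∑' k : ℕ, ∑ j, c i * c j * r i j ^ (k + 1) :=
            Summable.tsum_finsetSum fun i _ => summable_sum fun j _ => hsumm2 i j
        _ = ∑ i, ∑ j, ∑' k : ℕ, c i * c j * r i j ^ (k + 1) :=
            Finset.sum_congr rfl fun i _ => Summable.tsum_finsetSum fun j _ => hsumm2 i j
        _ = ∑ i, ∑ j, c i * c j * ∑' k : ℕ, r i j ^ (k + 1) :=
            Finset.sum_congr rfl fun i _ => Finset.sum_congr rfl fun j _ =>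
              tsum_mul_left
    · have : ∑ i, ∑ j, c i * c j * (z i * z j)
          = (∑ i, c i * z i) * (∑ j, c j * z j) := by
        rw [Finset.sum_mul_sum]
        exact Finset.sum_congr rfl fun i _ => Finset.sum_congr rfl fun j _ => by ring
      rw [this]
      exact mul_self_nonneg _
  -- conclude
  have hfinal : ∑ i : Fin m, ∑ j : Fin m, c i * c j * dpeak (A i) (A j)
      = (∑ i, ∑ j, c i * c j) - ∑ i, ∑ j, c i * c j * Jpeak (A i) (A j) := by
    simp_rw [dpeak, mul_sub, mul_one, Finset.sum_sub_distrib]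
  rw [hfinal, hzero, zero_sub, neg_nonpos]
  exact hJ
end

section
/- The Cartesian sign-split embedding ψ_C : ℂⁿ → ℝ₊^{4n} is injective, and the induced Tanimoto distance d_{ψC}(Z,W) = d_Tan(ψ_C(Z), ψ_C(W)) is a metric on ℂⁿ: for all Z, W, V ∈ ℂⁿ, d_{ψC}(Z,W) ≥ 0 with d_{ψC}(Z,W) = 0 if and only if Z = W, d_{ψC}(Z,W) = d_{ψC}(W,Z), and d_{ψC}(Z,V) ≤ d_{ψC}(Z,W) + d_{ψC}(W,V). -/
open Finset

/-- Cartesian sign-split embedding `ψ_C : ℂⁿ → ℝ₊^{4n}`: each complex coordinate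
`zᵢ = aᵢ + i·bᵢ` produces the four nonnegative components `(aᵢ⁺, aᵢ⁻, bᵢ⁺, bᵢ⁻)`,
indexed here by `Fin n × Fin 4`. -/
noncomputable def psiC {n : ℕ} (Z : Fin n → ℂ) : Fin n × Fin 4 → ℝ :=
  fun p =>
    if p.2 = 0 then max (Z p.1).re 0
    else if p.2 = 1 then max (-(Z p.1).re) 0
    else if p.2 = 2 then max (Z p.1).im 0
    else max (-(Z p.1).im) 0

/-- Tanimoto similarity on nonnegative vectors. -/
noncomputable def JTan {ι : Type*} [Fintype ι] (u v : ι → ℝ) : ℝ :=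
  if 0 < ∑ j, max (u j) (v j) then (∑ j, min (u j) (v j)) / (∑ j, max (u j) (v j)) else 1

/-- Tanimoto distance `d_Tan = 1 − J_Tan`. -/
noncomputable def dTan {ι : Type*} [Fintype ι] (u v : ι → ℝ) : ℝ := 1 - JTan u v

/-- Induced Tanimoto distance on ℂⁿ via the Cartesian sign-split embedding. -/
noncomputable def dPsiC {n : ℕ} (Z W : Fin n → ℂ) : ℝ := dTan (psiC Z) (psiC W)

section aux
variable {ι : Type*} [Fintype ι]

private lemma sum_max_add_min (u v : ι → ℝ) :
    ∑ j, max (u j) (v j) + ∑ j, min (u j) (v j) = ∑ j, u j + ∑ j, v j := by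
  rw [← Finset.sum_add_distrib, ← Finset.sum_add_distrib]
  exact Finset.sum_congr rfl fun j _ => max_add_min _ _

private lemma sum_max_sub_min (u v : ι → ℝ) :
    ∑ j, max (u j) (v j) - ∑ j, min (u j) (v j) = ∑ j, |u j - v j| := by
  rw [← Finset.sum_sub_distrib]
  exact Finset.sum_congr rfl fun j _ => max_sub_min_eq_abs' _ _

private lemma dTan_nonneg' (u v : ι → ℝ) : 0 ≤ dTan u v := by
  unfold dTan JTan
  split_ifs with h
  · have hle : ∑ j, min (u j) (v j) ≤ ∑ j, max (u j) (v j) :=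
      Finset.sum_le_sum fun j _ => min_le_max
    have := (div_le_one h).2 hle
    linarith
  · simp

private lemma dTan_self' (u : ι → ℝ) : dTan u u = 0 := by
  unfold dTan JTan
  simp only [max_self, min_self]
  split_ifs with h
  · rw [div_self (ne_of_gt h)]; ring
  · ring

private lemma dTan_comm' (u v : ι → ℝ) : dTan u v = dTan v u := by
  unfold dTan JTan
  rw [show (∑ j, max (u j) (v j)) = ∑ j, max (v j) (u j) from
      Finset.sum_congr rfl fun j _ => max_comm _ _,
    show (∑ j, min (u j) (v j)) = ∑ j, min (v j) (u j) from
      Finset.sum_congr rfl fun j _ => min_comm _ _]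

private lemma dTan_eq_zero' {u v : ι → ℝ} (hu : ∀ j, 0 ≤ u j) (hv : ∀ j, 0 ≤ v j)
    (h : dTan u v = 0) : u = v := by
  unfold dTan JTan at h
  split_ifs at h with hM
  · have hmM : ∑ j, min (u j) (v j) = ∑ j, max (u j) (v j) := by
      have : (∑ j, min (u j) (v j)) / (∑ j, max (u j) (v j)) = 1 := by linarith
      field_simp at this
      linarith
    have habs : ∑ j, |u j - v j| = 0 := by
      rw [← sum_max_sub_min]; linarith
    funext j
    have := (Finset.sum_eq_zero_iff_of_nonneg (fun j _ => abs_nonneg (u j - v j))).1 habs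
      j (Finset.mem_univ j)
    have := abs_eq_zero.1 this
    linarith
  · -- sum of maxes is not positive, hence zero, hence u = v = 0
    have hM0 : ∑ j, max (u j) (v j) = 0 := by
      have : 0 ≤ ∑ j, max (u j) (v j) :=
        Finset.sum_nonneg fun j _ => le_trans (hu j) (le_max_left _ _)
      rcases this.lt_or_eq with h' | h'
      · exact absurd h' hM
      · exact h'.symm
    funext j
    have := (Finset.sum_eq_zero_iff_of_nonneg
      (fun j _ => le_trans (hu j) (le_max_left (u j) (v j)))).1 hM0 j (Finset.mem_univ j)
    have hu0 : u j = 0 := le_antisymm (le_trans (le_max_left _ _) this.le) (hu j)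
    have hv0 : v j = 0 := le_antisymm (le_trans (le_max_right _ _) this.le) (hv j)
    rw [hu0, hv0]

private lemma key_ineq {P Q R X Y Z : ℝ} (hP : 0 ≤ P) (hQ : 0 ≤ Q)
    (hX : 0 ≤ X) (hZ : 0 ≤ Z)
    (hR : R ≤ P + Q) (hYZ : Y ≤ Z + Q) (hYX : Y ≤ X + P)
    (h1 : 0 < X + Z + R) (h2 : 0 < X + Y + P) (h3 : 0 < Y + Z + Q) :
    2*R/(X+Z+R) ≤ 2*P/(X+Y+P) + 2*Q/(Y+Z+Q) := by
  have h4 : 0 < X + Z + (P + Q) := by linarith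
  have step1 : 2*R/(X+Z+R) ≤ 2*(P+Q)/(X+Z+(P+Q)) := by
    rw [div_le_div_iff₀ h1 h4]
    nlinarith
  have e : 2*(P+Q)/(X+Z+(P+Q)) = 2*P/(X+Z+(P+Q)) + 2*Q/(X+Z+(P+Q)) := by ring
  have s2 : 2*P/(X+Z+(P+Q)) ≤ 2*P/(X+Y+P) := by
    rw [div_le_div_iff₀ h4 h2]; nlinarith
  have s3 : 2*Q/(X+Z+(P+Q)) ≤ 2*Q/(Y+Z+Q) := by
    rw [div_le_div_iff₀ h4 h3]; nlinarith
  linarith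

private lemma dTan_formula {u v : ι → ℝ} (h : 0 < ∑ j, max (u j) (v j)) :
    dTan u v = (∑ j, |u j - v j|) / (∑ j, max (u j) (v j)) := by
  unfold dTan JTan
  rw [if_pos h, ← sum_max_sub_min]
  field_simp

private lemma sum_max_pos {u v : ι → ℝ} (hu : ∀ j, 0 ≤ u j) (hv : ∀ j, 0 ≤ v j)
    (hne : u ≠ v) : 0 < ∑ j, max (u j) (v j) := by
  obtain ⟨j, hj⟩ := Function.ne_iff.1 hne
  refine Finset.sum_pos' (fun j _ => le_trans (hu j) (le_max_left _ _)) ⟨j, Finset.mem_univ j, ?_⟩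
  rcases hj.lt_or_gt with h' | h'
  · exact lt_of_lt_of_le (lt_of_le_of_lt (hu j) h') (le_max_right _ _)
  · exact lt_of_lt_of_le (lt_of_le_of_lt (hv j) h') (le_max_left _ _)

private lemma dTan_triangle' (u v w : ι → ℝ) (hu : ∀ j, 0 ≤ u j)
    (hv : ∀ j, 0 ≤ v j) (hw : ∀ j, 0 ≤ w j) :
    dTan u w ≤ dTan u v + dTan v w := by
  by_cases huv : u = v
  · subst huv; rw [dTan_self']; linarith [le_refl (dTan u w)]
  by_cases hvw : v = w
  · subst hvw; rw [dTan_self']; linarith [le_refl (dTan u v)]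
  by_cases huw : 0 < ∑ j, max (u j) (w j)
  · have hMuv := sum_max_pos hu hv huv
    have hMvw := sum_max_pos hv hw hvw
    set X := ∑ j, u j with hXdef
    set Y := ∑ j, v j with hYdef
    set Z := ∑ j, w j with hZdef
    set P := ∑ j, |u j - v j| with hPdef
    set Q := ∑ j, |v j - w j| with hQdef
    set R := ∑ j, |u j - w j| with hRdef
    have h2Muw : X + Z + R = 2 * ∑ j, max (u j) (w j) := by
      have h1 := sum_max_add_min u w
      have h2 := sum_max_sub_min u w
      simp only [← hXdef, ← hZdef, ← hRdef] at h1 h2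
      linarith
    have h2Muv : X + Y + P = 2 * ∑ j, max (u j) (v j) := by
      have h1 := sum_max_add_min u v
      have h2 := sum_max_sub_min u v
      simp only [← hXdef, ← hYdef, ← hPdef] at h1 h2
      linarith
    have h2Mvw : Y + Z + Q = 2 * ∑ j, max (v j) (w j) := by
      have h1 := sum_max_add_min v w
      have h2 := sum_max_sub_min v w
      simp only [← hYdef, ← hZdef, ← hQdef] at h1 h2
      linarith
    have e1 : dTan u w = 2*R/(X+Z+R) := by
      rw [dTan_formula huw, h2Muw, ← hRdef, mul_div_mul_left _ _ (two_ne_zero)]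
    have e2 : dTan u v = 2*P/(X+Y+P) := by
      rw [dTan_formula hMuv, h2Muv, ← hPdef, mul_div_mul_left _ _ (two_ne_zero)]
    have e3 : dTan v w = 2*Q/(Y+Z+Q) := by
      rw [dTan_formula hMvw, h2Mvw, ← hQdef, mul_div_mul_left _ _ (two_ne_zero)]
    rw [e1, e2, e3]
    apply key_ineq
    · exact Finset.sum_nonneg fun j _ => abs_nonneg _
    · exact Finset.sum_nonneg fun j _ => abs_nonneg _
    · exact Finset.sum_nonneg fun j _ => hu j
    · exact Finset.sum_nonneg fun j _ => hw j
    · rw [hPdef, hQdef, hRdef, ← Finset.sum_add_distrib]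
      exact Finset.sum_le_sum fun j _ => abs_sub_le _ _ _
    · rw [hYdef, hZdef, hQdef, ← Finset.sum_add_distrib]
      refine Finset.sum_le_sum fun j _ => ?_
      have := abs_sub_le (v j) (w j) (w j)
      have := le_abs_self (v j - w j)
      linarith
    · rw [hYdef, hXdef, hPdef, ← Finset.sum_add_distrib]
      refine Finset.sum_le_sum fun j _ => ?_
      have := neg_abs_le (u j - v j)
      linarith
    · rw [h2Muw]; linarith
    · rw [h2Muv]; linarith
    · rw [h2Mvw]; linarith
  · have : dTan u w = 0 := by
      unfold dTan JTan
      rw [if_neg huw]; ring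
    rw [this]
    have := dTan_nonneg' u v
    have := dTan_nonneg' v w
    linarith

end aux

private lemma psiC_nonneg {n : ℕ} (Z : Fin n → ℂ) (p : Fin n × Fin 4) : 0 ≤ psiC Z p := by
  unfold psiC
  split_ifs <;> exact le_max_right _ _

private lemma signsplit_inj {a b : ℝ} (h0 : max a 0 = max b 0)
    (h1 : max (-a) 0 = max (-b) 0) : a = b := by
  have ea : a = max a 0 - max (-a) 0 := by
    rcases le_total 0 a with h | h
    · rw [max_eq_left h, max_eq_right (neg_nonpos.2 h)]; ring
    · rw [max_eq_right h, max_eq_left (neg_nonneg.2 h)]; ring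
  have eb : b = max b 0 - max (-b) 0 := by
    rcases le_total 0 b with h | h
    · rw [max_eq_left h, max_eq_right (neg_nonpos.2 h)]; ring
    · rw [max_eq_right h, max_eq_left (neg_nonneg.2 h)]; ring
  rw [ea, eb, h0, h1]

private lemma psiC_inj {n : ℕ} : Function.Injective (psiC (n := n)) := by
  intro Z W h
  funext i
  have h0 := congrFun h (i, (0 : Fin 4))
  have h1 := congrFun h (i, (1 : Fin 4))
  have h2 := congrFun h (i, (2 : Fin 4))
  have h3 := congrFun h (i, (3 : Fin 4))
  simp only [psiC] at h0 h1 h2 h3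
  norm_num at h0 h1 h2 h3
  exact Complex.ext (signsplit_inj h0 h1) (signsplit_inj h2 h3)

/-- The Cartesian sign-split embedding `ψ_C` is injective, and the induced Tanimoto
distance `d_{ψC}(Z,W) = d_Tan(ψ_C(Z), ψ_C(W))` is a metric on `ℂⁿ`: nonnegativity,
identity of indiscernibles, symmetry, and the triangle inequality. -/
theorem psiC_injective_and_metric {n : ℕ} :
    Function.Injective (psiC (n := n)) ∧
    ∀ Z W V : Fin n → ℂ,
      0 ≤ dPsiC Z W ∧ (dPsiC Z W = 0 ↔ Z = W) ∧ dPsiC Z W = dPsiC W Z ∧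
        dPsiC Z V ≤ dPsiC Z W + dPsiC W V := by
  refine ⟨psiC_inj, fun Z W V => ⟨dTan_nonneg' _ _, ⟨fun h => psiC_inj (dTan_eq_zero'
    (psiC_nonneg Z) (psiC_nonneg W) h), fun h => by rw [h]; exact dTan_self' _⟩,
    dTan_comm' _ _, dTan_triangle' _ _ _ (psiC_nonneg Z) (psiC_nonneg W) (psiC_nonneg V)⟩⟩
end

section
/- The Cartesian complex Tanimoto kernel K_{ψC}(Z,W) = J_Tan(ψ_C(Z), ψ_C(W)) is positive semidefinite on ℂⁿ: for any finite collection Z₁,…,Z_m ∈ ℂⁿ and any real coefficients c₁,…,c_m, Σᵢ Σⱼ cᵢ cⱼ K_{ψC}(Zᵢ, Zⱼ) ≥ 0. -/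
open Finset

/-- Cartesian complex Tanimoto kernel `K_{ψC}(Z,W) = J_Tan(ψ_C(Z), ψ_C(W))`. -/
noncomputable def KpsiC {n : ℕ} (Z W : Fin n → ℂ) : ℝ := JTan (psiC Z) (psiC W)

section Aux

open MeasureTheory Set Matrix

variable {m : ℕ}

/-- Quadratic forms of integral Gram matrices are nonnegative. -/
lemma gram_integral_nonneg (μ : Measure ℝ) (g : Fin m → ℝ → ℝ) (c : Fin m → ℝ)
    (hg : ∀ i j, Integrable (fun t => g i t * g j t) μ) :
    0 ≤ ∑ i, ∑ j, c i * c j * ∫ t, g i t * g j t ∂μ := by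
  have hig : ∀ i j : Fin m, Integrable (fun t => c i * c j * (g i t * g j t)) μ :=
    fun i j => (hg i j).const_mul _
  have key : ∑ i, ∑ j, c i * c j * ∫ t, g i t * g j t ∂μ
      = ∫ t, ∑ i, ∑ j, c i * c j * (g i t * g j t) ∂μ := by
    rw [integral_finset_sum _ (fun i _ => integrable_finset_sum _ (fun j _ => hig i j))]
    refine Finset.sum_congr rfl fun i _ => ?_
    rw [integral_finset_sum _ (fun j _ => hig i j)]
    exact Finset.sum_congr rfl fun j _ => (integral_const_mul _ _).symm
  rw [key]
  refine integral_nonneg fun t => ?_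
  show (0:ℝ) ≤ ∑ i, ∑ j, c i * c j * (g i t * g j t)
  have h2 : ∑ i, ∑ j, c i * c j * (g i t * g j t) = (∑ i, c i * g i t) ^ 2 := by
    rw [sq, Finset.sum_mul_sum]
    exact Finset.sum_congr rfl fun i _ => Finset.sum_congr rfl fun j _ => by ring
  rw [h2]
  positivity

/-- Quadratic form of a positive semidefinite real matrix. -/
lemma psd_quad {M : Matrix (Fin m) (Fin m) ℝ} (hM : M.PosSemidef) (c : Fin m → ℝ) :
    0 ≤ ∑ i, ∑ j, c i * c j * M i j := by
  have h := hM.dotProduct_mulVec_nonneg c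
  have e : dotProduct (star c) (M *ᵥ c) = ∑ i, ∑ j, c i * c j * M i j := by
    simp only [dotProduct, Matrix.mulVec, Pi.star_apply, star_trivial, Finset.mul_sum]
    exact Finset.sum_congr rfl fun i _ => Finset.sum_congr rfl fun j _ => by ring
  rw [e] at h
  exact h

/-- Build positive semidefiniteness from symmetry and nonnegative quadratic forms. -/
lemma posSemidef_of_quad {M : Matrix (Fin m) (Fin m) ℝ} (hsym : ∀ i j, M i j = M j i)
    (h : ∀ c : Fin m → ℝ, 0 ≤ ∑ i, ∑ j, c i * c j * M i j) : M.PosSemidef := by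
  refine Matrix.PosSemidef.of_dotProduct_mulVec_nonneg ?_ ?_
  · ext i j
    simp only [Matrix.conjTranspose_apply, star_trivial]
    exact hsym j i
  · intro x
    have e : dotProduct (star x) (M *ᵥ x) = ∑ i, ∑ j, x i * x j * M i j := by
      simp only [dotProduct, Matrix.mulVec, Pi.star_apply, star_trivial, Finset.mul_sum]
      exact Finset.sum_congr rfl fun i _ => Finset.sum_congr rfl fun j _ => by ring
    rw [e]
    exact h x

/-- Schur product theorem (for real matrices, via Gram factorizations). -/
lemma hadamard_posSemidef {A B : Matrix (Fin m) (Fin m) ℝ}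
    (hA : A.PosSemidef) (hB : B.PosSemidef) :
    (Matrix.of fun i j => A i j * B i j).PosSemidef := by
  obtain ⟨X, hX⟩ : ∃ X : Matrix (Fin m) (Fin m) ℝ, A = Xᴴ * X := by
    open scoped MatrixOrder in exact CStarAlgebra.nonneg_iff_eq_star_mul_self.mp hA.nonneg
  obtain ⟨Y, hY⟩ : ∃ Y : Matrix (Fin m) (Fin m) ℝ, B = Yᴴ * Y := by
    open scoped MatrixOrder in exact CStarAlgebra.nonneg_iff_eq_star_mul_self.mp hB.nonneg
  set C : Matrix (Fin m × Fin m) (Fin m) ℝ :=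
    Matrix.of (fun p j => X p.1 j * Y p.2 j) with hC
  have key : (Matrix.of fun i j => A i j * B i j) = Cᴴ * C := by
    ext i j
    simp only [Matrix.of_apply, Matrix.mul_apply, Matrix.conjTranspose_apply, star_trivial,
      hX, hY, hC]
    rw [Fintype.sum_prod_type, Finset.sum_mul_sum]
    exact Finset.sum_congr rfl fun k _ => Finset.sum_congr rfl fun l _ => by ring
  rw [key]
  exact Matrix.posSemidef_conjTranspose_mul_self C

/-- The one-dimensional min kernel is positive semidefinite on nonnegative reals. -/
lemma min_quad_nonneg (x : Fin m → ℝ) (hx : ∀ i, 0 ≤ x i) (c : Fin m → ℝ) :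
    0 ≤ ∑ i, ∑ j, c i * c j * min (x i) (x j) := by
  set g : Fin m → ℝ → ℝ := fun i => (Set.Ioc (0:ℝ) (x i)).indicator (fun _ => (1:ℝ)) with hg
  have hmul : ∀ i j t, g i t * g j t
      = (Set.Ioc (0:ℝ) (min (x i) (x j))).indicator (fun _ => (1:ℝ)) t := by
    intro i j t
    rw [hg]
    simp only
    rw [← Set.inter_indicator_mul, Set.Ioc_inter_Ioc, max_self]
    simp
  have hint : ∀ i j, Integrable (fun t => g i t * g j t) volume := by
    intro i j
    have : (fun t => g i t * g j t)
        = (Set.Ioc (0:ℝ) (min (x i) (x j))).indicator (fun _ => (1:ℝ)) :=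
      funext fun t => hmul i j t
    rw [this, integrable_indicator_iff measurableSet_Ioc]
    exact integrableOn_const measure_Ioc_lt_top.ne
  have hval : ∀ i j, ∫ t, g i t * g j t = min (x i) (x j) := by
    intro i j
    have : (fun t => g i t * g j t)
        = (Set.Ioc (0:ℝ) (min (x i) (x j))).indicator (fun _ => (1:ℝ)) :=
      funext fun t => hmul i j t
    rw [this, integral_indicator_const _ measurableSet_Ioc, Real.volume_real_Ioc_of_le (le_min (hx i) (hx j)), sub_zero,
      smul_eq_mul, mul_one]
  have e : ∑ i, ∑ j, c i * c j * min (x i) (x j)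
      = ∑ i, ∑ j, c i * c j * ∫ t, g i t * g j t :=
    Finset.sum_congr rfl fun i _ => Finset.sum_congr rfl fun j _ => by rw [hval i j]
  rw [e]
  exact gram_integral_nonneg volume g c hint

/-- `∫ t in Ioi 0, exp (-b * t) = b⁻¹` for `b > 0`. -/
lemma integral_exp_neg_mul_Ioi_zero {b : ℝ} (hb : 0 < b) :
    ∫ t in Set.Ioi (0:ℝ), Real.exp (-b * t) = b⁻¹ := by
  have hderiv : ∀ t ∈ Set.Ioi (0:ℝ),
      HasDerivAt (fun s => -Real.exp (-b * s) / b) (Real.exp (-b * t)) t := by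
    intro t _
    have h1 : HasDerivAt (fun s : ℝ => -b * s) (-b) t := by
      simpa using (hasDerivAt_id t).const_mul (-b)
    have h2 := (h1.exp.div_const b).neg
    have h5 : (fun x : ℝ => -(Real.exp (-b * x) / b)) = fun s : ℝ => -Real.exp (-b * s) / b :=
      funext fun x => (neg_div _ _).symm
    have h6 : -(Real.exp (-b * t) * -b / b) = Real.exp (-b * t) := by
      have h3 : -(Real.exp (-b * t) * -b / b) = Real.exp (-b * t) * (b / b) := by ring
      rw [h3, div_self hb.ne', mul_one]
    rw [show (-fun x : ℝ => Real.exp (-b * x) / b) = fun x : ℝ => -(Real.exp (-b * x) / b) from rfl,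
      h5, h6] at h2
    exact h2
  have hcont : ContinuousWithinAt (fun s => -Real.exp (-b * s) / b) (Set.Ici (0:ℝ)) 0 :=
    (Continuous.continuousWithinAt (by continuity))
  have hint : MeasureTheory.IntegrableOn (fun t => Real.exp (-b * t)) (Set.Ioi (0:ℝ)) :=
    exp_neg_integrableOn_Ioi 0 hb
  have htend : Filter.Tendsto (fun s => -Real.exp (-b * s) / b) Filter.atTop (nhds 0) := by
    have h1 : Filter.Tendsto (fun s : ℝ => b * s) Filter.atTop Filter.atTop :=
      Filter.Tendsto.const_mul_atTop hb Filter.tendsto_id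
    have h2 : Filter.Tendsto (fun s : ℝ => Real.exp (-b * s)) Filter.atTop (nhds 0) := by
      have h4 := (Real.tendsto_exp_neg_atTop_nhds_zero).comp h1
      have h5 : ((fun y : ℝ => Real.exp (-y)) ∘ fun s : ℝ => b * s)
          = fun s : ℝ => Real.exp (-b * s) := funext fun s => by simp [neg_mul]
      rwa [h5] at h4
    have h6 := (h2.neg).div_const b
    simpa using h6
  have := MeasureTheory.integral_Ioi_of_hasDerivAt_of_tendsto hcont hderiv hint htend
  rw [this]
  simp [div_eq_mul_inv]

/-- The Cauchy-type kernel `(a i + a j)⁻¹` is positive semidefinite for positive `a`. -/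
lemma inv_add_quad_nonneg (a : Fin m → ℝ) (ha : ∀ i, 0 < a i) (c : Fin m → ℝ) :
    0 ≤ ∑ i, ∑ j, c i * c j * (a i + a j)⁻¹ := by
  set μ := MeasureTheory.volume.restrict (Set.Ioi (0:ℝ)) with hμ
  set g : Fin m → ℝ → ℝ := fun i t => Real.exp (-(a i) * t) with hg
  have hprod : ∀ i j, (fun t => g i t * g j t) = fun t => Real.exp (-(a i + a j) * t) := by
    intro i j
    funext t
    rw [hg]
    simp only
    rw [← Real.exp_add]
    ring_nf
  have hint : ∀ i j, Integrable (fun t => g i t * g j t) μ := by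
    intro i j
    rw [hprod i j, hμ]
    exact exp_neg_integrableOn_Ioi 0 (add_pos (ha i) (ha j))
  have hval : ∀ i j, ∫ t, g i t * g j t ∂μ = (a i + a j)⁻¹ := by
    intro i j
    rw [hprod i j, hμ]
    exact integral_exp_neg_mul_Ioi_zero (add_pos (ha i) (ha j))
  have e : ∑ i, ∑ j, c i * c j * (a i + a j)⁻¹
      = ∑ i, ∑ j, c i * c j * ∫ t, g i t * g j t ∂μ :=
    Finset.sum_congr rfl fun i _ => Finset.sum_congr rfl fun j _ => by rw [hval i j]
  rw [e]
  exact gram_integral_nonneg μ g c hint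

/-- Main auxiliary lemma: the Tanimoto kernel is positive semidefinite on nonnegative
vectors. -/
lemma jtan_psd {ι : Type} [Fintype ι] (u : Fin m → ι → ℝ) (hu : ∀ i p, 0 ≤ u i p)
    (c : Fin m → ℝ) :
    0 ≤ ∑ i, ∑ j, c i * c j * JTan (u i) (u j) := by
  classical
  set a : Fin m → ℝ := fun i => ∑ p, u i p with haDef
  have ha0 : ∀ i, 0 ≤ a i := fun i => Finset.sum_nonneg fun p _ => hu i p
  set S : Fin m → Fin m → ℝ := fun i j => ∑ p, min (u i p) (u j p) with hSDef
  have hS0 : ∀ i j, 0 ≤ S i j :=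
    fun i j => Finset.sum_nonneg fun p _ => le_min (hu i p) (hu j p)
  have hSle : ∀ i j, S i j ≤ a i :=
    fun i j => Finset.sum_le_sum fun p _ => min_le_left _ _
  have hSsymm : ∀ i j, S i j = S j i :=
    fun i j => Finset.sum_congr rfl fun p _ => min_comm _ _
  have hmaxsum : ∀ i j, ∑ p, max (u i p) (u j p) = a i + a j - S i j := by
    intro i j
    have h1 : ∀ p : ι, max (u i p) (u j p) = u i p + u j p - min (u i p) (u j p) := by
      intro p
      have := min_add_max (u i p) (u j p)
      linarith
    simp_rw [h1]
    rw [Finset.sum_sub_distrib, Finset.sum_add_distrib]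
  -- modified denominators, positive everywhere
  set A : Fin m → ℝ := fun i => if 0 < a i then a i else 1 with hADef
  have hA : ∀ i, 0 < A i := by
    intro i
    rw [hADef]
    simp only
    split_ifs with h
    · exact h
    · exact one_pos
  -- the ratio matrix
  set R : Fin m → Fin m → ℝ := fun i j => S i j * (A i + A j)⁻¹ with hRDef
  have hR0 : ∀ i j, 0 ≤ R i j := by
    intro i j
    exact mul_nonneg (hS0 i j) (inv_nonneg.mpr (le_of_lt (add_pos (hA i) (hA j))))
  have hSzero : ∀ i j, ¬ 0 < a i → S i j = 0 :=
    fun i j h => le_antisymm ((hSle i j).trans (by linarith [le_antisymm (not_lt.mp h) (ha0 i)]))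
      (hS0 i j)
  have hRlt : ∀ i j, R i j < 1 := by
    intro i j
    by_cases hi : 0 < a i
    · by_cases hj : 0 < a j
      · have hAi : A i = a i := by rw [hADef]; simp [hi]
        have hAj : A j = a j := by rw [hADef]; simp [hj]
        rw [hRDef]
        simp only
        rw [← div_eq_mul_inv, div_lt_one (by rw [hAi, hAj]; exact add_pos hi hj)]
        rw [hAi, hAj]
        have := hSle i j
        linarith
      · have : S i j = 0 := by rw [hSsymm]; exact hSzero j i hj
        rw [hRDef]
        simp [this]
    · have : S i j = 0 := hSzero i j hi
      rw [hRDef]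
      simp [this]
  -- positive semidefiniteness of the Hadamard powers of R
  have hSmat : (Matrix.of S).PosSemidef := by
    apply posSemidef_of_quad (fun i j => hSsymm i j)
    intro x
    rw [hSDef]
    simp only [Matrix.of_apply]
    have e : ∑ i, ∑ j, x i * x j * ∑ p, min (u i p) (u j p)
        = ∑ p : ι, ∑ i, ∑ j, x i * x j * min (u i p) (u j p) :=
      calc ∑ i, ∑ j, x i * x j * ∑ p, min (u i p) (u j p)
          = ∑ i, ∑ j, ∑ p : ι, x i * x j * min (u i p) (u j p) := by
            simp_rw [Finset.mul_sum]
        _ = ∑ i, ∑ p : ι, ∑ j, x i * x j * min (u i p) (u j p) :=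
            Finset.sum_congr rfl fun i _ => Finset.sum_comm
        _ = ∑ p : ι, ∑ i, ∑ j, x i * x j * min (u i p) (u j p) := Finset.sum_comm
    rw [e]
    exact Finset.sum_nonneg fun p _ => min_quad_nonneg (fun i => u i p) (fun i => hu i p) x
  have hCmat : (Matrix.of fun i j => (A i + A j)⁻¹).PosSemidef := by
    apply posSemidef_of_quad (fun i j => by simp only [Matrix.of_apply]; rw [add_comm])
    intro x
    exact inv_add_quad_nonneg A hA x
  have hRmat : (Matrix.of R).PosSemidef := by
    have := hadamard_posSemidef hSmat hCmat
    convert this using 2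
    rfl
  have hRpow : ∀ k : ℕ, (Matrix.of fun i j => R i j ^ (k + 1)).PosSemidef := by
    intro k
    induction k with
    | zero =>
      have e : (Matrix.of fun i j => R i j ^ (0 + 1)) = Matrix.of R := by
        ext i j; simp
      rw [e]
      exact hRmat
    | succ k ih =>
      have := hadamard_posSemidef ih hRmat
      have e : (Matrix.of fun i j => R i j ^ (k + 1 + 1))
          = Matrix.of fun i j =>
              (Matrix.of fun i j => R i j ^ (k + 1)) i j * (Matrix.of R) i j := by
        ext i j
        simp [pow_succ]
      rw [e]
      exact this
  -- split coefficients
  set d : Fin m → ℝ := fun i => if 0 < a i then c i else 0 with hdDef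
  set e : Fin m → ℝ := fun i => if 0 < a i then 0 else c i with heDef
  -- key pointwise identity
  have hkey : ∀ i j, c i * c j * JTan (u i) (u j)
      = e i * e j + d i * d j * ∑' k : ℕ, R i j ^ (k + 1) := by
    intro i j
    by_cases hi : 0 < a i
    · by_cases hj : 0 < a j
      · have hAi : A i = a i := by rw [hADef]; simp [hi]
        have hAj : A j = a j := by rw [hADef]; simp [hj]
        have hei : e i = 0 := by rw [heDef]; simp [hi]
        have hdi : d i = c i := by rw [hdDef]; simp [hi]
        have hdj : d j = c j := by rw [hdDef]; simp [hj]
        have hmaxpos : 0 < ∑ p, max (u i p) (u j p) :=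
          lt_of_lt_of_le hi (Finset.sum_le_sum fun p _ => le_max_left _ _)
        have hJ : JTan (u i) (u j) = S i j / (a i + a j - S i j) := by
          rw [JTan, if_pos hmaxpos, hmaxsum i j]
        have hdenpos : 0 < a i + a j - S i j := by
          have := hSle i j
          linarith
        have htsum : ∑' k : ℕ, R i j ^ (k + 1) = S i j / (a i + a j - S i j) := by
          have hgeo : ∑' k : ℕ, R i j ^ k = (1 - R i j)⁻¹ :=
            tsum_geometric_of_lt_one (hR0 i j) (hRlt i j)
          have h1 : ∑' k : ℕ, R i j ^ (k + 1) = (∑' k : ℕ, R i j ^ k) * R i j := by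
            rw [← tsum_mul_right]
            exact tsum_congr fun k => by rw [pow_succ]
          rw [h1, hgeo, hRDef]
          simp only
          rw [hAi, hAj]
          have hb : (0:ℝ) < a i + a j := add_pos hi hj
          rw [← div_eq_mul_inv (S i j)]
          rw [one_sub_div hb.ne']
          rw [inv_div, div_mul_div_comm, mul_comm (a i + a j) (S i j),
            mul_div_mul_right _ _ hb.ne']
        rw [hJ, htsum, hei, hdi, hdj]
        ring
      · have hei : e i = 0 := by rw [heDef]; simp [hi]
        have hdj : d j = 0 := by rw [hdDef]; simp [hj]
        have hSij : S i j = 0 := by rw [hSsymm]; exact hSzero j i hj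
        have hmaxpos : 0 < ∑ p, max (u i p) (u j p) :=
          lt_of_lt_of_le hi (Finset.sum_le_sum fun p _ => le_max_left _ _)
        have hJ : JTan (u i) (u j) = 0 := by
          rw [JTan, if_pos hmaxpos]
          have : (∑ p, min (u i p) (u j p)) = 0 := hSij
          rw [this, zero_div]
        rw [hJ, hei, hdj]
        ring
    · by_cases hj : 0 < a j
      · have hej : e j = 0 := by rw [heDef]; simp [hj]
        have hdi : d i = 0 := by rw [hdDef]; simp [hi]
        have hSij : S i j = 0 := hSzero i j hi
        have hmaxpos : 0 < ∑ p, max (u i p) (u j p) :=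
          lt_of_lt_of_le hj (Finset.sum_le_sum fun p _ => le_max_right _ _)
        have hJ : JTan (u i) (u j) = 0 := by
          rw [JTan, if_pos hmaxpos]
          have : (∑ p, min (u i p) (u j p)) = 0 := hSij
          rw [this, zero_div]
        rw [hJ, hej, hdi]
        ring
      · have hai : a i = 0 := le_antisymm (not_lt.mp hi) (ha0 i)
        have haj : a j = 0 := le_antisymm (not_lt.mp hj) (ha0 j)
        have hei : e i = c i := by rw [heDef]; simp [hi]
        have hej : e j = c j := by rw [heDef]; simp [hj]
        have hdi : d i = 0 := by rw [hdDef]; simp [hi]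
        have hmax0 : (∑ p, max (u i p) (u j p)) = 0 := by
          rw [hmaxsum i j, hai, haj, hSzero i j hi]
          ring
        have hJ : JTan (u i) (u j) = 1 := by
          rw [JTan, if_neg (by rw [hmax0]; exact lt_irrefl 0)]
        rw [hJ, hei, hej, hdi]
        ring
  -- assemble
  have hsplit : ∑ i, ∑ j, c i * c j * JTan (u i) (u j)
      = (∑ i, ∑ j, e i * e j) + ∑ i, ∑ j, d i * d j * ∑' k : ℕ, R i j ^ (k + 1) := by
    rw [← Finset.sum_add_distrib]
    refine Finset.sum_congr rfl fun i _ => ?_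
    rw [← Finset.sum_add_distrib]
    exact Finset.sum_congr rfl fun j _ => hkey i j
  rw [hsplit]
  have h1 : 0 ≤ ∑ i, ∑ j, e i * e j := by
    have : ∑ i, ∑ j, e i * e j = (∑ i, e i) ^ 2 := by
      rw [sq, Finset.sum_mul_sum]
    rw [this]
    positivity
  have hsummable : ∀ i j, Summable (fun k : ℕ => d i * d j * R i j ^ (k + 1)) := by
    intro i j
    have hgeo : Summable (fun k : ℕ => R i j ^ k) :=
      summable_geometric_of_lt_one (hR0 i j) (hRlt i j)
    refine (hgeo.mul_left (d i * d j * R i j)).congr fun k => ?_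
    rw [pow_succ]
    ring
  have h2 : 0 ≤ ∑ i, ∑ j, d i * d j * ∑' k : ℕ, R i j ^ (k + 1) := by
    have e1 : ∑ i, ∑ j, d i * d j * ∑' k : ℕ, R i j ^ (k + 1)
        = ∑' k : ℕ, ∑ i, ∑ j, d i * d j * R i j ^ (k + 1) := by
      have step : ∀ i : Fin m, ∑ j, d i * d j * ∑' k : ℕ, R i j ^ (k + 1)
          = ∑' k : ℕ, ∑ j, d i * d j * R i j ^ (k + 1) := by
        intro i
        calc ∑ j, d i * d j * ∑' k : ℕ, R i j ^ (k + 1)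
            = ∑ j, ∑' k : ℕ, d i * d j * R i j ^ (k + 1) :=
              Finset.sum_congr rfl fun j _ => (tsum_mul_left).symm
          _ = ∑' k : ℕ, ∑ j, d i * d j * R i j ^ (k + 1) :=
              (Summable.tsum_finsetSum (fun j _ => hsummable i j)).symm
      calc ∑ i, ∑ j, d i * d j * ∑' k : ℕ, R i j ^ (k + 1)
          = ∑ i, ∑' k : ℕ, ∑ j, d i * d j * R i j ^ (k + 1) :=
            Finset.sum_congr rfl fun i _ => step i
        _ = ∑' k : ℕ, ∑ i, ∑ j, d i * d j * R i j ^ (k + 1) :=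
            (Summable.tsum_finsetSum (fun i _ => summable_sum (fun j _ => hsummable i j))).symm
    rw [e1]
    refine tsum_nonneg fun k => ?_
    have := psd_quad (hRpow k) d
    convert this using 2
    all_goals rfl
  linarith

end Aux

/-- The Cartesian complex Tanimoto kernel is positive semidefinite on `ℂⁿ`:
for any `Z₁,…,Z_m ∈ ℂⁿ` and real coefficients `c₁,…,c_m`,
`Σᵢ Σⱼ cᵢ cⱼ K_{ψC}(Zᵢ,Zⱼ) ≥ 0`. -/
theorem KpsiC_psd {n m : ℕ} (Z : Fin m → Fin n → ℂ) (c : Fin m → ℝ) :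
    0 ≤ ∑ i : Fin m, ∑ j : Fin m, c i * c j * KpsiC (Z i) (Z j) := by
  have hu : ∀ (i : Fin m) (p : Fin n × Fin 4), 0 ≤ psiC (Z i) p := by
    intro i p
    unfold psiC
    split_ifs <;> exact le_max_right _ _
  exact jtan_psd (fun i => psiC (Z i)) hu c
end
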